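/- Suppose the differences {X_i − X_j : 1 ≤ i, j ≤ m} span ℝ^d. For t ∈ ℝ^d let p(t) be the probability vector with p(t)_j = e^{⟨t, X_j⟩}/Z(t), let G(t) = diag(p(t)) − p(t)·p(t)^T (an m×m matrix), and let M be the d×m matrix with columns X₁,…,X_m. Then for every t ∈ ℝ^d the d×d matrix M·G(t)·M^T is non-singular; equivalently, x·M·G(t)·M^T·x^T > 0 for every non-zero x ∈ ℝ^d. -/

import Mathlib

open scoped BigOperators RealInnerProductSpace
open Filter Topology

noncomputable section

/-- `Euc s` is the Euclidean space `ℝ^s`. -/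
abbrev Euc (s : ℕ) := EuclideanSpace ℝ (Fin s)

/-- The additive semigroup `X₁ℕ + ⋯ + X_mℕ` generated by the vectors `X j`. -/
def sgOf {s : ℕ} {ι : Type*} [Fintype ι] (X : ι → Euc s) : Set (Euc s) :=
  {z | ∃ u : ι → ℕ, ∑ j, (u j : ℝ) • X j = z}

/-- The lattice `X₁ℤ + ⋯ + X_mℤ` generated by the vectors `X j`. -/
def latOf {s : ℕ} {ι : Type*} [Fintype ι] (X : ι → Euc s) : Set (Euc s) :=
  {z | ∃ u : ι → ℤ, ∑ j, (u j : ℝ) • X j = z}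

/-- The convex cone `X₁ℝ⁺ + ⋯ + X_mℝ⁺` generated by the vectors `X j`. -/
def coneOf {s : ℕ} {ι : Type*} [Fintype ι] (X : ι → Euc s) : Set (Euc s) :=
  {x | ∃ c : ι → ℝ, (∀ j, 0 ≤ c j) ∧ ∑ j, c j • X j = x}

/-- The multiplicity of `z`: the number of finite words `i₁…i_n` with
`X_{i₁} + ⋯ + X_{i_n} = z`. -/
def mult {s : ℕ} {ι : Type*} [Fintype ι] (X : ι → Euc s) (z : Euc s) : ℕ :=
  Set.ncard {w : List ι | (w.map X).sum = z}

/-- The multiplicity extended to the cone: the minimum of `mult X z` over points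
`z` of the semigroup nearest to `x`. -/
def multC {s : ℕ} {ι : Type*} [Fintype ι] (X : ι → Euc s) (x : Euc s) : ℕ :=
  sInf {n | ∃ z ∈ sgOf X, dist x z = Metric.infDist x (sgOf X) ∧ mult X z = n}

/-- All the vectors `X j` have integer coordinates. -/
def IntegralVecs {s : ℕ} {ι : Type*} (X : ι → Euc s) : Prop :=
  ∀ j i, ∃ n : ℤ, X j i = (n : ℝ)

/-- The entropy `h(p) = -∑ p_j log p_j` of a probability vector. -/
def entropy {m : ℕ} (p : Fin m → ℝ) : ℝ := -∑ j, p j * Real.log (p j)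

/-- The `p`-th iteration of `X`: all sums `X_{ω₁} + ⋯ + X_{ω_p}` over words `ω`. -/
def iter {s m : ℕ} (X : Fin m → Euc s) (p : ℕ) : (Fin p → Fin m) → Euc s :=
  fun ω => ∑ i, X (ω i)

/-- If the differences `X_i - X_j` span `ℝ^d`, then for every `t ∈ ℝ^d` the matrix
`M G(t) Mᵀ` is non-singular, where `G(t) = diag(p(t)) - p(t) p(t)ᵀ` with
`p(t)_j = e^{⟨t,X_j⟩}/Z(t)` and `M` has columns `X₁,…,X_m`; equivalently the
associated quadratic form is positive definite. -/
theorem stmt11 {d m : ℕ} (hm : 2 ≤ m) (X : Fin m → Euc d)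
    (hspan : Submodule.span ℝ {v : Euc d | ∃ i j, v = X i - X j} = ⊤)
    (t : Euc d) :
    let p : Fin m → ℝ := fun j => Real.exp ⟪t, X j⟫ / ∑ i, Real.exp ⟪t, X i⟫
    let G : Matrix (Fin m) (Fin m) ℝ :=
      Matrix.diagonal p - Matrix.of (fun i j => p i * p j)
    let M : Matrix (Fin d) (Fin m) ℝ := Matrix.of (fun i j => X j i)
    (M * G * M.transpose).det ≠ 0 ∧
    ∀ x : Fin d → ℝ, x ≠ 0 → 0 < dotProduct x ((M * G * M.transpose).mulVec x) := by
  intro p G M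
  haveI : NeZero m := ⟨by omega⟩
  have hZ : (0:ℝ) < ∑ i, Real.exp ⟪t, X i⟫ :=
    Finset.sum_pos (fun i _ => Real.exp_pos _) Finset.univ_nonempty
  have hppos : ∀ j, 0 < p j := fun j => div_pos (Real.exp_pos _) hZ
  have hpsum : ∑ j, p j = 1 := by
    simp only [p]
    rw [← Finset.sum_div, div_self hZ.ne']
  set A := M * G * M.transpose with hA
  have key : ∀ x : Fin d → ℝ, x ≠ 0 → 0 < dotProduct x (A.mulVec x) := by
    intro x hx
    set y : Fin m → ℝ := M.transpose.mulVec x with hy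
    set μ : ℝ := ∑ a, p a * y a with hμ
    have lhs_eq : dotProduct x (A.mulVec x)
        = (∑ a, y a * (p a * y a)) - μ * μ := by
      have h1 : A.mulVec x = M.mulVec (G.mulVec (M.transpose.mulVec x)) := by
        rw [hA, Matrix.mulVec_mulVec, Matrix.mulVec_mulVec]
      rw [h1, Matrix.dotProduct_mulVec, ← Matrix.mulVec_transpose, ← hy]
      have hG : G = Matrix.diagonal p - Matrix.of (fun i j => p i * p j) := rfl
      rw [hG, Matrix.sub_mulVec, dotProduct_sub]
      congr 1
      · exact Finset.sum_congr rfl fun a _ => by rw [Matrix.mulVec_diagonal]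
      · have : ∀ a, (Matrix.of (fun i j => p i * p j)).mulVec y a = p a * μ := by
          intro a
          simp only [Matrix.mulVec, dotProduct, Matrix.of_apply, hμ,
            Finset.mul_sum]
          exact Finset.sum_congr rfl fun b _ => by ring
        calc dotProduct y ((Matrix.of (fun i j => p i * p j)).mulVec y)
            = ∑ a, (p a * y a) * μ := Finset.sum_congr rfl fun a _ => by
              rw [this a]; ring
          _ = μ * μ := by rw [← Finset.sum_mul, ← hμ]
    have var : ∑ a, p a * (y a - μ)^2 = (∑ a, y a * (p a * y a)) - μ * μ := by
      have h2 : ∀ a, p a * (y a - μ)^2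
          = y a * (p a * y a) - (2*μ) * (p a * y a) + (μ*μ) * p a := fun a => by ring
      simp_rw [h2]
      rw [Finset.sum_add_distrib, Finset.sum_sub_distrib, ← Finset.mul_sum,
        ← Finset.mul_sum, ← hμ, hpsum]
      ring
    rw [lhs_eq, ← var]
    have hya : ∀ a : Fin m, y a = ∑ k, X a k * x k := by
      intro a
      simp [hy, Matrix.mulVec, dotProduct, Matrix.transpose_apply, M]
    have hne : ∃ a, y a ≠ μ := by
      by_contra hcon
      push_neg at hcon
      apply hx
      set x' : Euc d := (WithLp.equiv 2 (Fin d → ℝ)).symm x with hx'def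
      have hinner : ∀ a : Fin m, ⟪X a, x'⟫ = y a := by
        intro a
        rw [hya a]
        simp [PiLp.inner_apply, RCLike.inner_apply, x', hx'def, mul_comm]
      have hdiff : ∀ i j : Fin m, ⟪X i - X j, x'⟫ = 0 := by
        intro i j
        rw [inner_sub_left, hinner i, hinner j, hcon i, hcon j, sub_self]
      have hz : ∀ v ∈ Submodule.span ℝ {v : Euc d | ∃ i j, v = X i - X j},
          ⟪v, x'⟫ = 0 := by
        intro v hv
        induction hv using Submodule.span_induction with
        | mem v hv => obtain ⟨i, j, rfl⟩ := hv; exact hdiff i j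
        | zero => simp
        | add u v _ _ hu hv => rw [inner_add_left, hu, hv, add_zero]
        | smul c v _ hv => rw [real_inner_smul_left, hv, mul_zero]
      have hx0 : (x' : Euc d) = 0 := by
        have h3 : ⟪x', x'⟫ = 0 := hz x' (by rw [hspan]; exact Submodule.mem_top)
        exact inner_self_eq_zero.mp h3
      funext k
      have : x' k = (0 : Euc d) k := by rw [hx0]
      simpa [x'] using this
    obtain ⟨a0, ha0⟩ := hne
    refine Finset.sum_pos' (fun a _ => mul_nonneg (hppos a).le (sq_nonneg _))
      ⟨a0, Finset.mem_univ _, mul_pos (hppos a0) ?_⟩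
    have := sub_ne_zero.mpr ha0
    positivity
  have hG : G.transpose = G := by
    ext i j
    by_cases h : i = j
    · subst h; simp [G, mul_comm]
    · simp [G, Matrix.transpose_apply, Matrix.diagonal_apply_ne _ h,
        Matrix.diagonal_apply_ne _ (Ne.symm h), mul_comm]
  have hAt : A.transpose = A := by
    rw [hA, Matrix.transpose_mul, Matrix.transpose_mul, Matrix.transpose_transpose,
      hG, Matrix.mul_assoc]
  have hherm : A.IsHermitian := by
    have h4 : A.conjTranspose = A.transpose := by
      ext i j; simp [Matrix.conjTranspose_apply]
    exact h4.trans hAt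
  have hpd : A.PosDef := Matrix.PosDef.of_dotProduct_mulVec_pos hherm fun x hx => by simpa using key x hx
  exact ⟨hpd.det_pos.ne', key⟩
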